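/- Under the hypotheses of the sharp dual Chernoff-Ou-Pan inequality with 0 ≤ λ < k/π (k ≥ 2 integer, and a_n = b_n = 0 whenever n/k is an even integer), equality in ∫_0^{π/k} ρ_k(S,θ) ρ_k(S,θ+π/k) dθ ≤ kA(S) + λ(Ã(S,B)² − πA(S)) holds if and only if ρ(S,·) is constant, i.e., S is a disc centered at the origin. -/

import Mathlib

open Real Finset Complex MeasureTheory


lemma my_sum_range_two_mul (k : ℕ) (F : ℕ → ℝ) :
    ∑ i ∈ Finset.range (2*k), F i
      = ∑ i ∈ Finset.range k, F (2*i) + ∑ i ∈ Finset.range k, F (2*i+1) := by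
  induction k with
  | zero => simp
  | succ n ih =>
      rw [Nat.mul_succ, Finset.sum_range_succ, Finset.sum_range_succ, ih,
        Finset.sum_range_succ (f := fun i => F (2*i)),
        Finset.sum_range_succ (f := fun i => F (2*i+1))]
      ring

lemma my_zero_of_nonneg_periodic_integral_zero (h : ℝ → ℝ) (hc : Continuous h)
    (hnn : ∀ x, 0 ≤ h x) (hp : Function.Periodic h (2*π))
    (hint : (∫ x in (0:ℝ)..(2*π), h x) = 0) : ∀ x, h x = 0 := by
  intro θ
  set a := θ - 2*π with ha
  set G : ℝ → ℝ := fun u => ∫ x in a..u, h x with hG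
  have hπ : (0:ℝ) < π := Real.pi_pos
  have hii : ∀ u v : ℝ, IntervalIntegrable h MeasureTheory.volume u v :=
    fun u v => hc.intervalIntegrable u v
  have hshift : ∀ t : ℝ, (∫ x in t..(t+2*π), h x) = 0 := by
    intro t; rw [hp.intervalIntegral_add_eq t 0, zero_add, hint]
  have hG4 : G (a + 2*π + 2*π) = 0 := by
    show (∫ x in a..(a + 2*π + 2*π), h x) = 0
    rw [← intervalIntegral.integral_add_adjacent_intervals (hii a (a+2*π)) (hii (a+2*π) (a+2*π+2*π))]
    rw [hshift a, hshift (a+2*π)]; ring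
  have hGnn : ∀ u v : ℝ, u ≤ v → 0 ≤ ∫ x in u..v, h x := by
    intro u v huv
    exact intervalIntegral.integral_nonneg huv (fun x _ => hnn x)
  have hGzero : ∀ u, a ≤ u → u ≤ a + 2*π + 2*π → G u = 0 := by
    intro u h1 h2
    have l1 : 0 ≤ G u := hGnn a u h1
    have l2 : G u + ∫ x in u..(a+2*π+2*π), h x = G (a+2*π+2*π) :=
      intervalIntegral.integral_add_adjacent_intervals (hii a u) (hii u _)
    have l3 : 0 ≤ ∫ x in u..(a+2*π+2*π), h x := hGnn u _ h2
    rw [hG4] at l2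
    linarith
  have hmem : Set.Ioo a (a + 2*π + 2*π) ∈ nhds θ := by
    apply Ioo_mem_nhds <;> [skip; skip] <;> rw [ha] <;> linarith
  have hEq : G =ᶠ[nhds θ] (fun _ => (0:ℝ)) := by
    filter_upwards [hmem] with u hu
    exact hGzero u hu.1.le hu.2.le
  have hd1 : HasDerivAt G (h θ) θ := by
    apply intervalIntegral.integral_hasDerivAt_right (hii a θ)
    · exact hc.stronglyMeasurableAtFilter _ _
    · exact hc.continuousAt
  have hd2 : HasDerivAt G 0 θ := by
    exact (hasDerivAt_const θ (0:ℝ)).congr_of_eventuallyEq hEq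
  exact (hd1.unique hd2)

lemma my_const_of_fourier_vanish (g : ℝ → ℝ) (hg : Continuous g)
    (hp : Function.Periodic g (2*π))
    (h0 : ∀ n : ℤ, n ≠ 0 →
      (∫ x in (0:ℝ)..(2*π), Complex.exp (-(n:ℂ) * x * Complex.I) * (g x : ℂ)) = 0) :
    ∀ θ, g θ = g 0 := by
  have hT : (0:ℝ) < 2*π := by positivity
  haveI : Fact ((0:ℝ) < 2*π) := ⟨hT⟩
  have hpC : Function.Periodic (fun x : ℝ => (g x : ℂ)) (2*π) := fun x => by
    simp [hp x]
  let G : C(AddCircle (2*π), ℂ) :=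
    ⟨hpC.lift, by rw [continuous_coinduced_dom]; exact Complex.continuous_ofReal.comp hg⟩
  have hGcoe : ∀ x : ℝ, G (x : AddCircle (2*π)) = (g x : ℂ) := fun x => hpC.lift_coe x
  have hcoeff : ∀ n : ℤ, n ≠ 0 → fourierCoeff (⇑G) n = 0 := by
    intro n hn
    rw [fourierCoeff_eq_intervalIntegral (⇑G) n 0, zero_add]
    have hfun : ∀ x : ℝ, (fourier (-n) (x : AddCircle (2*π))) • G (x : AddCircle (2*π))
        = Complex.exp (-(n:ℂ) * x * Complex.I) * (g x : ℂ) := by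
      intro x
      have hπ : (π:ℂ) ≠ 0 := Complex.ofReal_ne_zero.mpr Real.pi_ne_zero
      have harg : 2 * (π:ℂ) * Complex.I * ((-n : ℤ):ℂ) * (x:ℂ) / ((2*π : ℝ):ℂ)
          = -(n:ℂ) * x * Complex.I := by
        push_cast
        field_simp
      rw [fourier_coe_apply, hGcoe, smul_eq_mul, harg]
    rw [intervalIntegral.integral_congr (fun x _ => hfun x), h0 n hn, smul_zero]
  have hsum : Summable (fourierCoeff (⇑G)) := by
    apply summable_of_ne_finset_zero (s := ({0} : Finset ℤ))
    intro n hn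
    exact hcoeff n (by simpa using hn)
  intro θ
  have h1 := has_pointwise_sum_fourier_series_of_summable hsum (θ : AddCircle (2*π))
  have h2 := has_pointwise_sum_fourier_series_of_summable hsum ((0:ℝ) : AddCircle (2*π))
  have e1 : HasSum (fun i => fourierCoeff (⇑G) i • fourier i (θ : AddCircle (2*π)))
      (fourierCoeff (⇑G) 0 • fourier 0 (θ : AddCircle (2*π))) :=
    hasSum_single 0 (fun i hi => by rw [hcoeff i hi, zero_smul])
  have e2 : HasSum (fun i => fourierCoeff (⇑G) i • fourier i (((0:ℝ)) : AddCircle (2*π)))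
      (fourierCoeff (⇑G) 0 • fourier 0 (((0:ℝ)) : AddCircle (2*π))) :=
    hasSum_single 0 (fun i hi => by rw [hcoeff i hi, zero_smul])
  have q1 := h1.unique e1
  have q2 := h2.unique e2
  rw [hGcoe] at q1 q2
  rw [fourier_zero] at q1 q2
  have : (g θ : ℂ) = (g 0 : ℂ) := by rw [q1, q2]
  exact_mod_cast this

lemma my_g_fourier_vanish (ρ : ℝ → ℝ) (hρ : Continuous ρ)
    (hper : Function.Periodic ρ (2*π)) (k : ℕ) (hk : 2 ≤ k)
    (hcos : ∀ p : ℕ, 0 < p → (2*k ∣ p) →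
      (∫ θ in (0:ℝ)..(2*π), ρ θ * Real.cos (p*θ)) = 0)
    (hsin : ∀ p : ℕ, 0 < p → (2*k ∣ p) →
      (∫ θ in (0:ℝ)..(2*π), ρ θ * Real.sin (p*θ)) = 0)
    (n : ℤ) (hn : n ≠ 0) :
    (∫ x in (0:ℝ)..(2*π), Complex.exp (-(n:ℂ) * x * Complex.I) *
      ((∑ m ∈ Finset.range (2*k), ρ (x + (m:ℝ) * (π/k)) : ℝ) : ℂ)) = 0 := by
  have hπ : (0:ℝ) < π := Real.pi_pos
  have hkR : (0:ℝ) < (k:ℝ) := by positivity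
  have hkC : ((k:ℝ):ℂ) ≠ 0 := by exact_mod_cast ne_of_gt hkR
  have hkC' : ((k:ℕ):ℂ) ≠ 0 := Nat.cast_ne_zero.mpr (by omega)
  have hπC : ((π:ℝ):ℂ) ≠ 0 := Complex.ofReal_ne_zero.mpr Real.pi_ne_zero
  set L : ℝ := π / k with hL
  set E : ℝ → ℂ := fun u => Complex.exp (-(n:ℂ) * u * Complex.I) * (ρ u : ℂ) with hE
  have hconte : Continuous (fun x : ℝ => Complex.exp (-(n:ℂ) * x * Complex.I)) :=
    Complex.continuous_exp.comp ((continuous_const.mul Complex.continuous_ofReal).mul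
      continuous_const)
  have hEcont : Continuous E := hconte.mul (Complex.continuous_ofReal.comp hρ)
  have hEper : Function.Periodic E (2*π) := by
    intro u
    have harg : -(n:ℂ) * ((u:ℝ) + 2*π) * Complex.I
        = -(n:ℂ) * u * Complex.I + ((-n : ℤ):ℂ) * (2*(π:ℂ)*Complex.I) := by
      push_cast; ring
    simp only [hE]
    push_cast
    rw [harg, Complex.exp_add, Complex.exp_int_mul_two_pi_mul_I, mul_one]
    rw [hper u]
  set r : ℂ := Complex.exp ((n:ℂ) * L * Complex.I) with hr
  set C : ℂ := ∫ u in (0:ℝ)..(2*π), E u with hC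
  -- rewrite the integral as (∑ r^m) * C
  have hterm : ∀ m : ℕ, (∫ x in (0:ℝ)..(2*π),
      Complex.exp (-(n:ℂ) * x * Complex.I) * ((ρ (x + (m:ℝ)*L) : ℝ) : ℂ)) = r^m * C := by
    intro m
    have e1 : ∀ x : ℝ, Complex.exp (-(n:ℂ) * x * Complex.I) * ((ρ (x + (m:ℝ)*L) : ℝ) : ℂ)
        = r^m * E (x + (m:ℝ)*L) := by
      intro x
      have harg : -(n:ℂ) * x * Complex.I
          = (m:ℂ) * ((n:ℂ) * L * Complex.I) + (-(n:ℂ) * (((x:ℝ) + (m:ℝ)*L : ℝ):ℂ) * Complex.I) := by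
        push_cast; ring
      rw [harg, Complex.exp_add, Complex.exp_nat_mul]
      simp only [hE]
      push_cast
      ring
    rw [intervalIntegral.integral_congr (fun x _ => e1 x)]
    rw [intervalIntegral.integral_const_mul]
    congr 1
    have e2 : (∫ x in (0:ℝ)..(2*π), E (x + (m:ℝ)*L))
        = ∫ x in (0 + (m:ℝ)*L)..(2*π + (m:ℝ)*L), E x :=
      intervalIntegral.integral_comp_add_right E ((m:ℝ)*L)
    rw [e2, show (2*π + (m:ℝ)*L) = (0 + (m:ℝ)*L) + 2*π by ring,
      hEper.intervalIntegral_add_eq (0 + (m:ℝ)*L) 0, zero_add, hC]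
  have hsplit : (∫ x in (0:ℝ)..(2*π), Complex.exp (-(n:ℂ) * x * Complex.I) *
      ((∑ m ∈ Finset.range (2*k), ρ (x + (m:ℝ) * (π/k)) : ℝ) : ℂ))
      = (∑ m ∈ Finset.range (2*k), r^m) * C := by
    have e3 : ∀ x : ℝ, Complex.exp (-(n:ℂ) * x * Complex.I) *
        ((∑ m ∈ Finset.range (2*k), ρ (x + (m:ℝ) * (π/k)) : ℝ) : ℂ)
        = ∑ m ∈ Finset.range (2*k),
            Complex.exp (-(n:ℂ) * x * Complex.I) * ((ρ (x + (m:ℝ)*L) : ℝ) : ℂ) := by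
      intro x
      rw [Complex.ofReal_sum, Finset.mul_sum]
    rw [intervalIntegral.integral_congr (fun x _ => e3 x)]
    rw [intervalIntegral.integral_finset_sum]
    · rw [Finset.sum_congr rfl (fun m _ => hterm m), ← Finset.sum_mul]
    · intro m _
      apply Continuous.intervalIntegrable
      exact hconte.mul (Complex.continuous_ofReal.comp
        (hρ.comp (continuous_id.add continuous_const)))
  rw [hsplit]
  by_cases hdvd : ((2*k : ℕ) : ℤ) ∣ n
  · -- C = 0
    have hCzero : C = 0 := by
      set p : ℕ := n.natAbs with hp
      have hppos : 0 < p := Int.natAbs_pos.mpr hn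
      have hpdvd : 2*k ∣ p := by
        obtain ⟨j, hj⟩ := hdvd
        refine ⟨j.natAbs, ?_⟩
        rw [hp, hj, Int.natAbs_mul, Int.natAbs_natCast]
      have hsplitpt : ∀ u : ℝ, E u
          = ((ρ u * Real.cos ((n:ℝ)*u) : ℝ) : ℂ)
            - ((ρ u * Real.sin ((n:ℝ)*u) : ℝ) : ℂ) * Complex.I := by
        intro u
        have harg : -(n:ℂ) * u * Complex.I = (((-((n:ℝ)*u) : ℝ)):ℂ) * Complex.I := by
          push_cast; ring
        simp only [hE]
        rw [harg, Complex.exp_mul_I, ← Complex.ofReal_cos, ← Complex.ofReal_sin,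
          Real.cos_neg, Real.sin_neg]
        push_cast; ring
      have hint1 : IntervalIntegrable (fun u => ((ρ u * Real.cos ((n:ℝ)*u) : ℝ) : ℂ))
          volume 0 (2*π) := by
        apply Continuous.intervalIntegrable
        exact Complex.continuous_ofReal.comp (hρ.mul
          (Real.continuous_cos.comp (continuous_const.mul continuous_id)))
      have hint2 : IntervalIntegrable (fun u => ((ρ u * Real.sin ((n:ℝ)*u) : ℝ) : ℂ) * Complex.I)
          volume 0 (2*π) := by
        apply Continuous.intervalIntegrable
        exact (Complex.continuous_ofReal.comp (hρ.mul
          (Real.continuous_sin.comp (continuous_const.mul continuous_id)))).mul continuous_const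
      rw [hC, intervalIntegral.integral_congr (fun u _ => hsplitpt u),
        intervalIntegral.integral_sub hint1 hint2, intervalIntegral.integral_mul_const,
        intervalIntegral.integral_ofReal, intervalIntegral.integral_ofReal]
      rcases Int.natAbs_eq n with hcase | hcase
      · have hnR : (n:ℝ) = (p:ℝ) := by
          rw [hp]
          conv_lhs => rw [hcase]
          push_cast
          simp [Nat.cast_natAbs]
        rw [hnR, hcos p hppos hpdvd, hsin p hppos hpdvd]
        simp
      · have hnR : (n:ℝ) = -(p:ℝ) := by
          rw [hp]
          conv_lhs => rw [hcase]
          push_cast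
          simp [Nat.cast_natAbs]
        have hc1 : (∫ u in (0:ℝ)..(2*π), ρ u * Real.cos ((n:ℝ)*u))
            = ∫ u in (0:ℝ)..(2*π), ρ u * Real.cos ((p:ℝ)*u) := by
          apply intervalIntegral.integral_congr
          intro u _
          show ρ u * Real.cos ((n:ℝ)*u) = ρ u * Real.cos ((p:ℝ)*u)
          rw [hnR, show (-(p:ℝ))*u = -((p:ℝ)*u) by ring, Real.cos_neg]
        have hc2 : (∫ u in (0:ℝ)..(2*π), ρ u * Real.sin ((n:ℝ)*u))
            = ∫ u in (0:ℝ)..(2*π), -(ρ u * Real.sin ((p:ℝ)*u)) := by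
          apply intervalIntegral.integral_congr
          intro u _
          show ρ u * Real.sin ((n:ℝ)*u) = -(ρ u * Real.sin ((p:ℝ)*u))
          rw [hnR, show (-(p:ℝ))*u = -((p:ℝ)*u) by ring, Real.sin_neg]
          ring
        rw [hc1, hc2, intervalIntegral.integral_neg, hcos p hppos hpdvd, hsin p hppos hpdvd]
        simp
    rw [hCzero, mul_zero]
  · -- geometric sum = 0
    have hr1 : r ≠ 1 := by
      intro hone
      obtain ⟨j, hj⟩ := Complex.exp_eq_one_iff.mp (hr ▸ hone)
      have hj' : ((n:ℝ)*L : ℝ) * Complex.I = (((j:ℝ)*(2*π) : ℝ):ℂ) * Complex.I := by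
        push_cast
        push_cast at hj
        linear_combination hj
      have h2 : (n:ℝ)*L = (j:ℝ)*(2*π) := by
        have := mul_right_cancel₀ Complex.I_ne_zero hj'
        exact_mod_cast this
      rw [hL] at h2
      have h3 : π * ((n:ℝ) - 2*(k:ℝ)*(j:ℝ)) = 0 := by
        field_simp at h2
        linear_combination π * h2
      have h4 : (n:ℝ) = 2*(k:ℝ)*(j:ℝ) := by
        rcases mul_eq_zero.mp h3 with h | h
        · exact absurd h Real.pi_ne_zero
        · linarith
      have h5 : n = 2*(k:ℤ)*j := by exact_mod_cast h4
      exact hdvd ⟨j, by push_cast; linarith [h5]⟩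
    have hgeom : (∑ m ∈ Finset.range (2*k), r^m) = 0 := by
      rw [geom_sum_eq hr1]
      have : r^(2*k) = 1 := by
        rw [hr, ← Complex.exp_nat_mul]
        rw [show ((2*k : ℕ):ℂ) * ((n:ℂ) * L * Complex.I) = (n:ℂ) * (2*(π:ℂ)*Complex.I) by
          rw [hL]; push_cast; field_simp]
        exact_mod_cast Complex.exp_int_mul_two_pi_mul_I n
      rw [this]
      simp
    rw [hgeom, zero_mul]


open Real Finset

set_option maxHeartbeats 1600000 in
theorem sharp_dual_chernoff_ou_pan_equality_small_lambda (ρ : ℝ → ℝ) (a b : ℕ → ℝ)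
    (hρ : Continuous ρ) (hpos : ∀ θ, 0 < ρ θ) (hper : ∀ θ, ρ (θ + 2 * π) = ρ θ)
    (ha : ∀ n : ℕ, a n = (1 / π) * ∫ θ in (0:ℝ)..(2 * π), ρ θ * Real.cos (n * θ))
    (hb : ∀ n : ℕ, b n = (1 / π) * ∫ θ in (0:ℝ)..(2 * π), ρ θ * Real.sin (n * θ))
    (k : ℕ) (hk : 2 ≤ k)
    (hvan : ∀ n : ℕ, 0 < n → k ∣ n → Even (n / k) → a n = 0 ∧ b n = 0)
    (lam : ℝ) (hlam0 : 0 ≤ lam) (hlam1 : lam < (k : ℝ) / π) :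
    ((∫ θ in (0:ℝ)..(π / k),
        (∑ m ∈ Finset.range k, ρ (θ + 2 * (m:ℝ) * π / k)) *
        (∑ m ∈ Finset.range k, ρ (θ + π / k + 2 * (m:ℝ) * π / k)))
      = (k : ℝ) * ((1 / 2) * ∫ θ in (0:ℝ)..(2 * π), (ρ θ) ^ 2) +
        lam * (((1 / 2) * ∫ θ in (0:ℝ)..(2 * π), ρ θ) ^ 2 -
               π * ((1 / 2) * ∫ θ in (0:ℝ)..(2 * π), (ρ θ) ^ 2)))
    ↔ ∃ c : ℝ, ∀ θ, ρ θ = c := by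
  have hπ : (0:ℝ) < π := Real.pi_pos
  have hkR : (0:ℝ) < (k:ℝ) := by
    have : 0 < k := by omega
    exact_mod_cast this
  have hkne : (k:ℝ) ≠ 0 := ne_of_gt hkR
  have hperiodic : Function.Periodic ρ (2*π) := hper
  set At : ℝ := (1 / 2) * ∫ θ in (0:ℝ)..(2 * π), ρ θ with hAtdef
  set AA : ℝ := (1 / 2) * ∫ θ in (0:ℝ)..(2 * π), (ρ θ) ^ 2 with hAAdef
  set L : ℝ := π / (k:ℝ) with hLdef
  have hL0 : 0 < L := by rw [hLdef]; positivity
  -- the k-fold sum function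
  set F : ℝ → ℝ := fun θ => ∑ m ∈ Finset.range k, ρ (θ + 2 * (m:ℝ) * π / (k:ℝ)) with hFdef
  have hFcont : Continuous F := by
    apply continuous_finset_sum
    exact fun m _ => hρ.comp (continuous_id.add continuous_const)
  -- the 2k-fold sum function
  set g : ℝ → ℝ := fun θ => ∑ m ∈ Finset.range (2*k), ρ (θ + (m:ℝ) * (π/(k:ℝ))) with hgdef
  have hgcont : Continuous g := by
    apply continuous_finset_sum
    exact fun m _ => hρ.comp (continuous_id.add continuous_const)
  have hgper : Function.Periodic g (2*π) := by
    intro θ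
    simp only [hgdef]
    apply Finset.sum_congr rfl
    intro m _
    rw [show θ + 2*π + (m:ℝ)*(π/(k:ℝ)) = (θ + (m:ℝ)*(π/(k:ℝ))) + 2*π by ring, hper]
  -- vanishing of cos/sin moments for multiples of 2k
  have hcos : ∀ p : ℕ, 0 < p → (2*k ∣ p) →
      (∫ θ in (0:ℝ)..(2*π), ρ θ * Real.cos (p*θ)) = 0 := by
    intro p hp hdvd
    obtain ⟨j, hj⟩ := hdvd
    have hkdvd : k ∣ p := ⟨2*j, by rw [hj]; ring⟩
    have heven : Even (p / k) := by
      have : p / k = 2*j := by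
        rw [hj, show 2*k*j = k*(2*j) by ring, Nat.mul_div_cancel_left _ (by omega)]
      rw [this]
      exact ⟨j, by ring⟩
    have h0 : (1/π) * (∫ θ in (0:ℝ)..(2*π), ρ θ * Real.cos (p*θ)) = 0 := by
      rw [← ha p]; exact (hvan p hp hkdvd heven).1
    rcases mul_eq_zero.mp h0 with h | h
    · exact absurd h (one_div_ne_zero Real.pi_ne_zero)
    · exact h
  have hsin : ∀ p : ℕ, 0 < p → (2*k ∣ p) →
      (∫ θ in (0:ℝ)..(2*π), ρ θ * Real.sin (p*θ)) = 0 := by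
    intro p hp hdvd
    obtain ⟨j, hj⟩ := hdvd
    have hkdvd : k ∣ p := ⟨2*j, by rw [hj]; ring⟩
    have heven : Even (p / k) := by
      have : p / k = 2*j := by
        rw [hj, show 2*k*j = k*(2*j) by ring, Nat.mul_div_cancel_left _ (by omega)]
      rw [this]
      exact ⟨j, by ring⟩
    have h0 : (1/π) * (∫ θ in (0:ℝ)..(2*π), ρ θ * Real.sin (p*θ)) = 0 := by
      rw [← hb p]; exact (hvan p hp hkdvd heven).2
    rcases mul_eq_zero.mp h0 with h | h
    · exact absurd h (one_div_ne_zero Real.pi_ne_zero)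
    · exact h
  -- g is constant
  have hgconst : ∀ θ, g θ = g 0 := by
    apply my_const_of_fourier_vanish g hgcont hgper
    intro n hn
    simp only [hgdef]
    exact my_g_fourier_vanish ρ hρ hperiodic k hk hcos hsin n hn
  set c₀ : ℝ := g 0 with hc₀def
  -- splitting of g into the two k-fold sums
  have hgLconst : ∀ θ : ℝ, F θ + F (θ + L) = c₀ := by
    intro θ
    have h1 := my_sum_range_two_mul k (fun i => ρ (θ + (i:ℝ)*(π/(k:ℝ))))
    have e1 : F θ = ∑ i ∈ Finset.range k, ρ (θ + ((2*i : ℕ):ℝ)*(π/(k:ℝ))) := by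
      simp only [hFdef]
      apply Finset.sum_congr rfl
      intro m _
      congr 1
      push_cast
      ring
    have e2 : F (θ + L) = ∑ i ∈ Finset.range k, ρ (θ + ((2*i+1 : ℕ):ℝ)*(π/(k:ℝ))) := by
      simp only [hFdef, hLdef]
      apply Finset.sum_congr rfl
      intro m _
      congr 1
      push_cast
      ring
    rw [e1, e2, ← h1, ← hgconst θ]
  have hFLcont : Continuous (fun θ => F (θ + L)) := hFcont.comp (continuous_id.add continuous_const)
  set II : ℝ := ∫ θ in (0:ℝ)..L, F θ with hIIdef
  set JJ : ℝ := ∫ θ in (0:ℝ)..L, (F θ)^2 with hJJdef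
  -- the main integral identity
  have hindep : (∫ θ in (0:ℝ)..L,
        (∑ m ∈ Finset.range k, ρ (θ + 2 * (m:ℝ) * π / (k:ℝ))) *
        (∑ m ∈ Finset.range k, ρ (θ + L + 2 * (m:ℝ) * π / (k:ℝ))))
      = c₀ * II - JJ := by
    have hpt : Set.EqOn
        (fun θ => (∑ m ∈ Finset.range k, ρ (θ + 2 * (m:ℝ) * π / (k:ℝ))) *
          (∑ m ∈ Finset.range k, ρ (θ + L + 2 * (m:ℝ) * π / (k:ℝ))))
        (fun θ => c₀ * F θ - (F θ)^2) (Set.uIcc 0 L) := by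
      intro θ _
      show F θ * F (θ + L) = c₀ * F θ - (F θ)^2
      have h2 : F (θ + L) = c₀ - F θ := by linarith [hgLconst θ]
      rw [h2]; ring
    rw [intervalIntegral.integral_congr hpt,
      intervalIntegral.integral_sub (f := fun θ => c₀ * F θ) (g := fun θ => (F θ)^2)
        ((continuous_const.mul hFcont).intervalIntegrable 0 L)
        ((hFcont.pow 2).intervalIntegrable 0 L),
      intervalIntegral.integral_const_mul]
  -- c₀ * L = 2 * At
  have hc₀L : c₀ * L = 2 * At := by
    have h1 : (∫ θ in (0:ℝ)..L, (F θ + F (θ + L))) = ∫ θ in (0:ℝ)..L, c₀ :=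
      intervalIntegral.integral_congr (fun θ _ => hgLconst θ)
    rw [intervalIntegral.integral_add (hFcont.intervalIntegrable 0 L)
      (hFLcont.intervalIntegrable 0 L), intervalIntegral.integral_const] at h1
    have h2 : (∫ θ in (0:ℝ)..L, F (θ + L)) = ∫ θ in L..(L+L), F θ := by
      rw [intervalIntegral.integral_comp_add_right F L, zero_add]
    have h3 : II + ∫ θ in L..(L+L), F θ = ∫ θ in (0:ℝ)..(L+L), F θ :=
      intervalIntegral.integral_add_adjacent_intervals (hFcont.intervalIntegrable 0 L)
        (hFcont.intervalIntegrable L (L+L))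
    have h4 : (∫ θ in (0:ℝ)..(L+L), F θ) = 2 * At := by
      simp only [hFdef]
      rw [intervalIntegral.integral_finset_sum
        (f := fun (m : ℕ) (θ : ℝ) => ρ (θ + 2 * (m:ℝ) * π / (k:ℝ)))
        (fun m _ => ((hρ.comp (continuous_id.add continuous_const)).intervalIntegrable 0 (L+L)))]
      have h5 : ∀ m : ℕ, (∫ θ in (0:ℝ)..(L+L), ρ (θ + 2 * (m:ℝ) * π / (k:ℝ)))
          = ∫ θ in (2*π*(m:ℝ)/(k:ℝ))..(2*π*((m:ℝ)+1)/(k:ℝ)), ρ θ := by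
        intro m
        rw [intervalIntegral.integral_comp_add_right ρ (2 * (m:ℝ) * π / (k:ℝ))]
        congr 1
        · ring
        · rw [hLdef]; field_simp; ring
      rw [Finset.sum_congr rfl (fun m _ => h5 m)]
      have h6 : ∀ m : ℕ, (2*π*((m:ℝ)+1)/(k:ℝ)) = 2*π*(((m+1 : ℕ)):ℝ)/(k:ℝ) := by
        intro m; push_cast; ring
      rw [Finset.sum_congr rfl (fun m _ => by rw [h6 m])]
      rw [intervalIntegral.sum_integral_adjacent_intervals
        (fun m _ => hρ.intervalIntegrable _ _)]
      norm_num
      rw [show 2*π*(k:ℝ)/(k:ℝ) = 2*π by field_simp]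
      rw [hAtdef]; ring
    have h7 : (L - 0) • c₀ = c₀ * L := by rw [smul_eq_mul]; ring
    rw [h7] at h1
    rw [h2, h3, h4] at h1
    linarith [h1]
  -- quadratic nonnegativity on [0, L]
  have hJn : ∀ c : ℝ, 0 ≤ JJ - 2*c*II + c^2*L := by
    intro c
    have e : (∫ θ in (0:ℝ)..L, (F θ - c)^2) = JJ - 2*c*II + c^2*L := by
      have hpt : Set.EqOn (fun θ => (F θ - c)^2)
          (fun θ => ((F θ)^2 - (2*c) * F θ) + c^2) (Set.uIcc 0 L) := by
        intro θ _; show (F θ - c)^2 = ((F θ)^2 - (2*c) * F θ) + c^2; ring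
      rw [intervalIntegral.integral_congr hpt,
        intervalIntegral.integral_add (f := fun θ => (F θ)^2 - (2*c) * F θ) (g := fun _ => c^2)
          (((hFcont.pow 2).sub (continuous_const.mul hFcont)).intervalIntegrable 0 L)
          (intervalIntegrable_const),
        intervalIntegral.integral_sub (f := fun θ => (F θ)^2) (g := fun θ => (2*c) * F θ)
          ((hFcont.pow 2).intervalIntegrable 0 L)
          ((continuous_const.mul hFcont).intervalIntegrable 0 L),
        intervalIntegral.integral_const_mul, intervalIntegral.integral_const,
        smul_eq_mul]
      ring
    have hnn : (0:ℝ) ≤ ∫ θ in (0:ℝ)..L, (F θ - c)^2 :=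
      intervalIntegral.integral_nonneg hL0.le (fun x _ => sq_nonneg _)
    rw [e] at hnn
    exact hnn
  -- quadratic identity on [0, 2π]
  have hAeq : ∀ c : ℝ, (∫ θ in (0:ℝ)..(2*π), (ρ θ - c)^2)
      = 2*AA - (4*c)*At + c^2*(2*π) := by
    intro c
    have hpt : Set.EqOn (fun θ => (ρ θ - c)^2)
        (fun θ => ((ρ θ)^2 - (2*c) * ρ θ) + c^2) (Set.uIcc 0 (2*π)) := by
      intro θ _; show (ρ θ - c)^2 = ((ρ θ)^2 - (2*c) * ρ θ) + c^2; ring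
    rw [intervalIntegral.integral_congr hpt,
      intervalIntegral.integral_add (f := fun θ => (ρ θ)^2 - (2*c) * ρ θ) (g := fun _ => c^2)
        (((hρ.pow 2).sub (continuous_const.mul hρ)).intervalIntegrable _ _)
        (intervalIntegrable_const),
      intervalIntegral.integral_sub (f := fun θ => (ρ θ)^2) (g := fun θ => (2*c) * ρ θ)
        ((hρ.pow 2).intervalIntegrable _ _)
        ((continuous_const.mul hρ).intervalIntegrable _ _),
      intervalIntegral.integral_const_mul, intervalIntegral.integral_const,
      smul_eq_mul, hAtdef, hAAdef]
    ring
  have hAnn : ∀ c : ℝ, 0 ≤ 2*AA - (4*c)*At + c^2*(2*π) := by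
    intro c
    have hnn : (0:ℝ) ≤ ∫ θ in (0:ℝ)..(2*π), (ρ θ - c)^2 :=
      intervalIntegral.integral_nonneg (by positivity : (0:ℝ) ≤ 2*π)
        (fun x _ => sq_nonneg _)
    rw [hAeq c] at hnn
    exact hnn
  clear_value At AA II JJ c₀ L F g
  have hAt2 : At^2 ≤ π * AA := by
    have := hAnn (At/π)
    have h1 : 2*AA - (4*(At/π))*At + (At/π)^2*(2*π) = 2*(π*AA - At^2)/π := by
      field_simp; ring
    rw [h1] at this
    nlinarith [mul_nonneg this hπ.le, div_mul_cancel₀ (2*(π*AA - At^2)) (ne_of_gt hπ)]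
  have hJJ2 : II^2 ≤ L * JJ := by
    have := hJn (II/L)
    have h1 : JJ - 2*(II/L)*II + (II/L)^2*L = (L*JJ - II^2)/L := by
      field_simp; ring
    rw [h1] at this
    nlinarith [mul_nonneg this hL0.le, div_mul_cancel₀ (L*JJ - II^2) (ne_of_gt hL0)]
  have hLk : L * (k:ℝ) = π := by rw [hLdef]; field_simp
  have hklam : lam * π < (k:ℝ) := (lt_div_iff₀ hπ).mp hlam1
  have hLlam : L * lam < 1 := by
    rw [hLdef]
    rw [show π/(k:ℝ)*lam = π*lam/(k:ℝ) by ring]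
    rw [div_lt_one hkR]
    linarith [hklam]
  constructor
  · -- equality implies constant
    intro heq
    rw [hindep] at heq
    have heqL : L*(c₀*II) - L*JJ = L*((k:ℝ)*AA) + L*(lam*(At^2 - π*AA)) := by
      linear_combination L * heq
    have s2 : L*(c₀*II) = 2*At*II := by linear_combination II * hc₀L
    have s3 : 2*At*II - II^2 ≤ At^2 := by nlinarith [sq_nonneg (At - II)]
    have s4 : L*((k:ℝ)*AA) = π*AA := by
      rw [show L*((k:ℝ)*AA) = (L*(k:ℝ))*AA by ring, hLk]
    have s5 : π*AA + L*(lam*(At^2 - π*AA)) ≤ At^2 := by linarith [heqL, s2, s3, s4, hJJ2]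
    have s8 : 0 ≤ L*lam := mul_nonneg hL0.le hlam0
    have hkey : π * AA = At^2 := by
      have hle : π*AA ≤ At^2 := by nlinarith [s5, hAt2, hLlam, s8]
      linarith [hAt2, hle]
    have hzero : (∫ θ in (0:ℝ)..(2*π), (ρ θ - At/π)^2) = 0 := by
      rw [hAeq (At/π)]
      have hre : 2*AA - (4*(At/π))*At + (At/π)^2*(2*π) = 2*(π*AA - At^2)/π := by
        field_simp; ring
      rw [hre, hkey]
      simp
    have hzc : Continuous (fun θ => (ρ θ - At/π)^2) := (hρ.sub continuous_const).pow 2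
    have hzp : Function.Periodic (fun θ => (ρ θ - At/π)^2) (2*π) := by
      intro θ; simp only; rw [hper θ]
    have hall := my_zero_of_nonneg_periodic_integral_zero _ hzc
      (fun x => sq_nonneg _) hzp hzero
    refine ⟨At/π, fun θ => ?_⟩
    have h := hall θ
    nlinarith [h, sq_nonneg (ρ θ - At/π)]
  · -- constant implies equality
    rintro ⟨c, hc⟩
    have hsumc : ∀ x : ℝ, (∑ m ∈ Finset.range k, ρ (x + 2 * (m:ℝ) * π / (k:ℝ))) = (k:ℝ) * c := by
      intro x
      rw [Finset.sum_congr rfl (fun m _ => hc _)]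
      rw [Finset.sum_const, Finset.card_range, nsmul_eq_mul]
    have hAAc : AA = π * c^2 := by
      rw [hAAdef]
      rw [intervalIntegral.integral_congr (g := fun _ => c^2) (fun θ _ => by rw [hc θ])]
      rw [intervalIntegral.integral_const, smul_eq_mul]
      ring
    have hAtc : At = π * c := by
      rw [hAtdef]
      rw [intervalIntegral.integral_congr (g := fun _ => c) (fun θ _ => hc θ)]
      rw [intervalIntegral.integral_const, smul_eq_mul]
      ring
    have hLHS : (∫ θ in (0:ℝ)..L,
        (∑ m ∈ Finset.range k, ρ (θ + 2 * (m:ℝ) * π / (k:ℝ))) *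
        (∑ m ∈ Finset.range k, ρ (θ + L + 2 * (m:ℝ) * π / (k:ℝ))))
        = L * ((k:ℝ)*c*((k:ℝ)*c)) := by
      rw [intervalIntegral.integral_congr (g := fun _ => (k:ℝ)*c*((k:ℝ)*c))
        (fun θ _ => by rw [hsumc θ, hsumc (θ + L)])]
      rw [intervalIntegral.integral_const, smul_eq_mul]
      ring
    rw [hLHS, hAAc, hAtc]
    rw [hLdef]
    field_simp
    ring
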